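/- Uniqueness of the DG solution: if $f_u \leq 0$ everywhere, the penalty $\lambda$ is large enough that $a_h$ is coercive, and $u_1, u_2 \in V_h$ both satisfy $a_h(u_i, v_h) = (f(u_i), v_h)$ for all $v_h \in V_h$, then $u_1 = u_2$. -/
import Mathlib


/-- **Uniqueness of the DG solution of the semilinear problem.**
`W` is the broken Sobolev space, `Vh ⊆ W` the DG finite element space, `a` the SIPDG
bilinear form with a penalty `λ` large enough that it is coercive in the DG norm `N`
(`hcoer`: `¼ ⦀v_h⦀_h² ≤ a_h(v_h, v_h)`); `N = ⦀·⦀_h` is a genuine norm on `V_h`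
(`hnorm`).  `G w v = (f(w), v)` is the nonlinear right-hand side pairing for a `C²`
nonlinearity `f` with `f_u ≤ 0`; by the mean value theorem,
`(f(u₁) - f(u₂), u₁ - u₂) = (f_u(θ)(u₁ - u₂), u₁ - u₂) ≤ 0`, which is the
monotonicity hypothesis `hmono`.  Conclusion: if `u₁, u₂ ∈ V_h` both satisfy
`a_h(u_i, v_h) = (f(u_i), v_h)` for all `v_h ∈ V_h`, then `u₁ = u₂`. -/
theorem stmt13
    {W : Type*} [AddCommGroup W] [Module ℝ W]
    (Vh : Submodule ℝ W)
    (a : W →ₗ[ℝ] W →ₗ[ℝ] ℝ)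
    (N : W → ℝ) (hNnn : ∀ v, 0 ≤ N v)
    (hcoer : ∀ v ∈ Vh, (1/4) * (N v) ^ 2 ≤ a v v)
    (hnorm : ∀ v ∈ Vh, N v = 0 → v = 0)
    (G : W → W →ₗ[ℝ] ℝ)
    (hmono : ∀ u₁ ∈ Vh, ∀ u₂ ∈ Vh, G u₁ (u₁ - u₂) - G u₂ (u₁ - u₂) ≤ 0)
    (u₁ u₂ : W) (h₁ : u₁ ∈ Vh) (h₂ : u₂ ∈ Vh)
    (hs₁ : ∀ v ∈ Vh, a u₁ v = G u₁ v)
    (hs₂ : ∀ v ∈ Vh, a u₂ v = G u₂ v) :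
    u₁ = u₂ := by
  have hd : u₁ - u₂ ∈ Vh := Vh.sub_mem h₁ h₂
  have he : a (u₁ - u₂) (u₁ - u₂) = G u₁ (u₁ - u₂) - G u₂ (u₁ - u₂) := by
    rw [map_sub a u₁ u₂, LinearMap.sub_apply, hs₁ _ hd, hs₂ _ hd]
  have h1 : (1/4) * (N (u₁ - u₂)) ^ 2 ≤ 0 := by
    calc (1/4) * (N (u₁ - u₂)) ^ 2 ≤ a (u₁ - u₂) (u₁ - u₂) := hcoer _ hd
    _ = _ := he
    _ ≤ 0 := hmono _ h₁ _ h₂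
  have hN : N (u₁ - u₂) = 0 := by nlinarith [hNnn (u₁ - u₂)]
  exact sub_eq_zero.mp (hnorm _ hd hN)
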